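/- 𝒳 is exactly the subgroup of GL(2,ℤ) generated by the three order-2 matrices f₀ = [[1,2],[0,−1]], f₁ = [[0,1],[1,0]], and r̄₁ = [[−1,0],[0,1]]: every matrix in GL(2,ℤ) with both column sums odd is a product of copies of these three matrices, and conversely every such product has both column sums odd. -/

import Mathlib

open Matrix

/-- Membership in `𝒳`: both column sums of `g` are odd. -/
def memX (g : Matrix.GeneralLinearGroup (Fin 2) ℤ) : Prop :=
  ((↑g : Matrix (Fin 2) (Fin 2) ℤ) 0 0 + (↑g : Matrix (Fin 2) (Fin 2) ℤ) 1 0) % 2 = 1 ∧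
  ((↑g : Matrix (Fin 2) (Fin 2) ℤ) 0 1 + (↑g : Matrix (Fin 2) (Fin 2) ℤ) 1 1) % 2 = 1

/-- `f₀ = [[1,2],[0,−1]]` as an element of `GL(2,ℤ)`. -/
def f0U : Matrix.GeneralLinearGroup (Fin 2) ℤ :=
  ⟨!![1, 2; 0, -1], !![1, 2; 0, -1], by decide, by decide⟩

/-- `f₁ = [[0,1],[1,0]]` as an element of `GL(2,ℤ)`. -/
def f1U : Matrix.GeneralLinearGroup (Fin 2) ℤ :=
  ⟨!![0, 1; 1, 0], !![0, 1; 1, 0], by decide, by decide⟩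

/-- `τ₁² = [[1,2],[0,1]]` as an element of `GL(2,ℤ)`. -/
def tau1sqU : Matrix.GeneralLinearGroup (Fin 2) ℤ :=
  ⟨!![1, 2; 0, 1], !![1, -2; 0, 1], by decide, by decide⟩

/-- `τ₂² = [[1,0],[−2,1]]` as an element of `GL(2,ℤ)`. -/
def tau2sqU : Matrix.GeneralLinearGroup (Fin 2) ℤ :=
  ⟨!![1, 0; -2, 1], !![1, 0; 2, 1], by decide, by decide⟩

/-- `r̄₁ = [[−1,0],[0,1]]` as an element of `GL(2,ℤ)`. -/
def rbar1U : Matrix.GeneralLinearGroup (Fin 2) ℤ :=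
  ⟨!![-1, 0; 0, 1], !![-1, 0; 0, 1], by decide, by decide⟩

/-- `r̄₂ = [[1,0],[0,−1]]` as an element of `GL(2,ℤ)`. -/
def rbar2U : Matrix.GeneralLinearGroup (Fin 2) ℤ :=
  ⟨!![1, 0; 0, -1], !![1, 0; 0, -1], by decide, by decide⟩

namespace XClosureAux

abbrev GL2 := Matrix.GeneralLinearGroup (Fin 2) ℤ

lemma emod_iff_cast (x : ℤ) : x % 2 = 1 ↔ (x : ZMod 2) = 1 := by
  rw [show ((1:ZMod 2)) = ((1:ℤ) : ZMod 2) by norm_num, ZMod.intCast_eq_intCast_iff]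
  unfold Int.ModEq; norm_num

lemma zmod_inv_aux : ∀ a b c d e f h i : ZMod 2, e*a + f*c = 1 → e*b+f*d = 0 →
    h*a+i*c = 0 → h*b+i*d = 1 → a + c = 1 → b + d = 1 → (e + h = 1 ∧ f + i = 1) := by decide

lemma memX_mul {g h : GL2} (hg : memX g) (hh : memX h) : memX (g * h) := by
  obtain ⟨hg1, hg2⟩ := hg
  obtain ⟨hh1, hh2⟩ := hh
  rw [emod_iff_cast] at hg1 hg2 hh1 hh2
  push_cast at hg1 hg2 hh1 hh2
  constructor <;>
  · rw [emod_iff_cast, Units.val_mul]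
    push_cast [Matrix.mul_apply, Fin.sum_univ_two]
    first
    | linear_combination ((h : Matrix (Fin 2) (Fin 2) ℤ) 0 0 : ZMod 2) * hg1 +
        ((h : Matrix (Fin 2) (Fin 2) ℤ) 1 0 : ZMod 2) * hg2 + hh1
    | linear_combination ((h : Matrix (Fin 2) (Fin 2) ℤ) 0 1 : ZMod 2) * hg1 +
        ((h : Matrix (Fin 2) (Fin 2) ℤ) 1 1 : ZMod 2) * hg2 + hh2

lemma memX_one : memX (1 : GL2) := by constructor <;> decide

lemma memX_inv {g : GL2} (hg : memX g) : memX g⁻¹ := by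
  obtain ⟨hg1, hg2⟩ := hg
  rw [emod_iff_cast] at hg1 hg2
  have h1 : (g⁻¹ : GL2).val * g.val = 1 := by
    rw [← Units.val_mul, inv_mul_cancel, Units.val_one]
  set M := g.val with hM
  set N := (g⁻¹ : GL2).val with hN
  have h1' : ∀ i j, (N * M) i j = (1 : Matrix (Fin 2) (Fin 2) ℤ) i j := fun i j => by rw [h1]
  have e1 : N 0 0 * M 0 0 + N 0 1 * M 1 0 = 1 := by
    simpa [Matrix.mul_apply, Fin.sum_univ_two, Matrix.one_apply] using h1' 0 0
  have e2 : N 0 0 * M 0 1 + N 0 1 * M 1 1 = 0 := by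
    simpa [Matrix.mul_apply, Fin.sum_univ_two, Matrix.one_apply] using h1' 0 1
  have e3 : N 1 0 * M 0 0 + N 1 1 * M 1 0 = 0 := by
    simpa [Matrix.mul_apply, Fin.sum_univ_two, Matrix.one_apply] using h1' 1 0
  have e4 : N 1 0 * M 0 1 + N 1 1 * M 1 1 = 1 := by
    simpa [Matrix.mul_apply, Fin.sum_univ_two, Matrix.one_apply] using h1' 1 1
  have key := zmod_inv_aux (M 0 0 : ZMod 2) (M 0 1) (M 1 0) (M 1 1) (N 0 0) (N 0 1) (N 1 0) (N 1 1)
    (by exact_mod_cast congrArg (Int.cast : ℤ → ZMod 2) e1)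
    (by exact_mod_cast congrArg (Int.cast : ℤ → ZMod 2) e2)
    (by exact_mod_cast congrArg (Int.cast : ℤ → ZMod 2) e3)
    (by exact_mod_cast congrArg (Int.cast : ℤ → ZMod 2) e4)
    (by exact_mod_cast hg1) (by exact_mod_cast hg2)
  constructor
  · rw [emod_iff_cast]; exact_mod_cast key.1
  · rw [emod_iff_cast]; exact_mod_cast key.2

/-- The set `𝒳` as a subgroup of `GL(2,ℤ)`. -/
def Xsub : Subgroup GL2 where
  carrier := {g | memX g}
  mul_mem' := fun ha hb => memX_mul ha hb
  one_mem' := memX_one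
  inv_mem' := fun h => memX_inv h

lemma tau1_zpow (k : ℤ) : ((tau1sqU ^ k : GL2) : Matrix (Fin 2) (Fin 2) ℤ) = !![1, 2*k; 0, 1] := by
  induction k using Int.induction_on with
  | zero => simp [Matrix.one_fin_two]
  | succ k ih =>
      rw [_root_.zpow_add_one, Units.val_mul, ih]
      rw [show tau1sqU.val = !![1,2;0,1] from rfl, Matrix.mul_fin_two]
      norm_num; ring_nf
  | pred k ih =>
      rw [_root_.zpow_sub_one, Units.val_mul, ih]
      rw [show (tau1sqU⁻¹).val = !![1,-2;0,1] from rfl, Matrix.mul_fin_two]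
      norm_num; ring_nf

lemma reduce_pos : ∀ n (a c : ℤ), 0 < c → a.natAbs = n → (a + c) % 2 = 1 →
    ∃ k : ℤ, (a + 2*c*k).natAbs < c.natAbs := by
  intro n
  induction n using Nat.strong_induction_on with
  | _ n ih =>
    intro a c hc hn hpar
    by_cases h : a.natAbs < c.natAbs
    · exact ⟨0, by simpa using h⟩
    · have hne : a.natAbs ≠ c.natAbs := by omega
      rcases le_or_gt 0 a with ha | ha
      · obtain ⟨k, hk⟩ := ih (a - 2*c).natAbs (by omega) (a - 2*c) c hc rfl (by omega)
        exact ⟨k - 1, by have e : a + 2*c*(k-1) = (a - 2*c) + 2*c*k := by ring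
                         rw [e]; exact hk⟩
      · obtain ⟨k, hk⟩ := ih (a + 2*c).natAbs (by omega) (a + 2*c) c hc rfl (by omega)
        exact ⟨k + 1, by have e : a + 2*c*(k+1) = (a + 2*c) + 2*c*k := by ring
                         rw [e]; exact hk⟩

lemma reduce (a c : ℤ) (hc : c ≠ 0) (hpar : (a + c) % 2 = 1) :
    ∃ k : ℤ, (a + 2*c*k).natAbs < c.natAbs := by
  rcases lt_or_gt_of_ne hc with h | h
  · obtain ⟨k, hk⟩ := reduce_pos a.natAbs a (-c) (by omega) rfl (by omega)
    refine ⟨-k, ?_⟩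
    have e : a + 2*c*(-k) = a + 2*(-c)*k := by ring
    rw [e]; omega
  · exact reduce_pos a.natAbs a c h rfl hpar

def S : Set GL2 := {f0U, f1U, rbar1U}

lemma f0_mem : f0U ∈ Subgroup.closure S := Subgroup.subset_closure (by simp [S])
lemma f1_mem : f1U ∈ Subgroup.closure S := Subgroup.subset_closure (by simp [S])
lemma rbar1_mem : rbar1U ∈ Subgroup.closure S := Subgroup.subset_closure (by simp [S])

lemma rbar2_eq : rbar2U = f1U * rbar1U * f1U := by
  apply Units.ext
  show rbar2U.val = f1U.val * rbar1U.val * f1U.val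
  decide

lemma tau1_eq : tau1sqU = rbar2U * f0U := by
  apply Units.ext
  show tau1sqU.val = rbar2U.val * f0U.val
  decide

lemma rbar2_mem : rbar2U ∈ Subgroup.closure S := by
  rw [rbar2_eq]; exact mul_mem (mul_mem f1_mem rbar1_mem) f1_mem

lemma tau1_mem : tau1sqU ∈ Subgroup.closure S := by
  rw [tau1_eq]; exact mul_mem rbar2_mem f0_mem

lemma f0_X : f0U ∈ Xsub := by constructor <;> decide
lemma f1_X : f1U ∈ Xsub := by constructor <;> decide
lemma rbar1_X : rbar1U ∈ Xsub := by constructor <;> decide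
lemma tau1_X : tau1sqU ∈ Xsub := by constructor <;> decide

/-- Base case: lower-left entry zero. -/
lemma base (g : GL2) (hc : g.val 1 0 = 0) (hX : memX g) : g ∈ Subgroup.closure S := by
  have hu : IsUnit g.val.det := (Matrix.isUnit_iff_isUnit_det g.val).mp g.isUnit
  have hdet : g.val.det = g.val 0 0 * g.val 1 1 - g.val 0 1 * g.val 1 0 := Matrix.det_fin_two _
  rw [hc, mul_zero, sub_zero] at hdet
  have had : g.val 0 0 * g.val 1 1 = 1 ∨ g.val 0 0 * g.val 1 1 = -1 := by
    rw [← hdet]; exact Int.isUnit_iff.mp hu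
  have ha : g.val 0 0 = 1 ∨ g.val 0 0 = -1 := by
    rcases had with h | h
    · exact Int.isUnit_iff.mp (IsUnit.of_mul_eq_one _ h)
    · exact Int.isUnit_iff.mp (IsUnit.of_mul_eq_one (-(g.val 1 1)) (by linarith))
  obtain ⟨hX1, hX2⟩ := hX
  rw [hc, add_zero] at hX1
  -- determine d
  have hd : g.val 1 1 = 1 ∨ g.val 1 1 = -1 := by
    rcases ha with h | h <;> rcases had with h' | h' <;> rw [h] at h' <;> omega
  obtain ⟨m, hm⟩ : ∃ m : ℤ, g.val 0 1 = 2 * m := ⟨g.val 0 1 / 2, by omega⟩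
  rcases ha with ha | ha <;> rcases hd with hd | hd
  · -- a = 1, d = 1 : g = tau1sqU ^ m
    have : g = tau1sqU ^ m := by
      apply Units.ext
      rw [tau1_zpow]
      ext i j
      fin_cases i <;> fin_cases j <;> simp_all
    rw [this]; exact Subgroup.zpow_mem _ tau1_mem m
  · -- a = 1, d = -1 : g = tau1sqU ^ (-m) * rbar2U
    have : g = tau1sqU ^ (-m) * rbar2U := by
      apply Units.ext
      rw [Units.val_mul, tau1_zpow, show rbar2U.val = !![1,0;0,-1] from rfl, Matrix.mul_fin_two]
      ext i j
      fin_cases i <;> fin_cases j <;> simp_all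
    rw [this]; exact mul_mem (Subgroup.zpow_mem _ tau1_mem _) rbar2_mem
  · -- a = -1, d = 1 : g = rbar1U * tau1sqU ^ (-m)
    have : g = rbar1U * tau1sqU ^ (-m) := by
      apply Units.ext
      rw [Units.val_mul, tau1_zpow, show rbar1U.val = !![-1,0;0,1] from rfl, Matrix.mul_fin_two]
      ext i j
      fin_cases i <;> fin_cases j <;> simp_all
    rw [this]; exact mul_mem rbar1_mem (Subgroup.zpow_mem _ tau1_mem _)
  · -- a = -1, d = -1 : g = rbar1U * tau1sqU ^ m * rbar2U
    have : g = rbar1U * tau1sqU ^ m * rbar2U := by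
      apply Units.ext
      rw [Units.val_mul, Units.val_mul, tau1_zpow,
        show rbar1U.val = !![-1,0;0,1] from rfl, show rbar2U.val = !![1,0;0,-1] from rfl,
        Matrix.mul_fin_two, Matrix.mul_fin_two]
      ext i j
      fin_cases i <;> fin_cases j <;> simp_all
    rw [this]; exact mul_mem (mul_mem rbar1_mem (Subgroup.zpow_mem _ tau1_mem m)) rbar2_mem

lemma descend : ∀ n (g : GL2), (g.val 1 0).natAbs = n → memX g → g ∈ Subgroup.closure S := by
  intro n
  induction n using Nat.strong_induction_on with
  | _ n ih =>
    intro g hn hX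
    by_cases hc : g.val 1 0 = 0
    · exact base g hc hX
    · obtain ⟨k, hk⟩ := reduce (g.val 0 0) (g.val 1 0) hc hX.1
      set h := f1U * tau1sqU ^ k with hh
      have hHmem : h ∈ Subgroup.closure S := mul_mem f1_mem (Subgroup.zpow_mem _ tau1_mem k)
      have hX2 : memX (h * g) :=
        Xsub.mul_mem (Xsub.mul_mem f1_X (Xsub.zpow_mem tau1_X k)) hX
      have hent : (h * g).val 1 0 = g.val 0 0 + 2 * g.val 1 0 * k := by
        rw [Units.val_mul, Units.val_mul, tau1_zpow,
          show f1U.val = !![0,1;1,0] from rfl]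
        simp [Matrix.mul_apply, Fin.sum_univ_two]
        ring
      have hlt : ((h * g).val 1 0).natAbs < n := by rw [hent]; omega
      have hmem := ih _ hlt (h * g) rfl hX2
      exact ((Subgroup.closure S).mul_mem_cancel_left hHmem).mp hmem

end XClosureAux

/-- `𝒳` is exactly the subgroup of `GL(2,ℤ)` generated by the three
order-2 matrices `f₀ = [[1,2],[0,−1]]`, `f₁ = [[0,1],[1,0]]` and `r̄₁ = [[−1,0],[0,1]]`. -/
theorem X_eq_closure_f0_f1_rbar1 :
    f0U ^ 2 = 1 ∧ f1U ^ 2 = 1 ∧ rbar1U ^ 2 = 1 ∧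
    (∀ g : Matrix.GeneralLinearGroup (Fin 2) ℤ,
      g ∈ Subgroup.closure
          ({f0U, f1U, rbar1U} : Set (Matrix.GeneralLinearGroup (Fin 2) ℤ)) ↔ memX g) := by
  refine ⟨?_, ?_, ?_, ?_⟩
  · apply Units.ext; rw [Units.val_pow_eq_pow_val, Units.val_one]; decide
  · apply Units.ext; rw [Units.val_pow_eq_pow_val, Units.val_one]; decide
  · apply Units.ext; rw [Units.val_pow_eq_pow_val, Units.val_one]; decide
  · intro g
    constructor
    · intro hg
      have hle : Subgroup.closure XClosureAux.S ≤ XClosureAux.Xsub := by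
        rw [Subgroup.closure_le]
        rintro x hx
        rcases hx with rfl | rfl | rfl
        · exact XClosureAux.f0_X
        · exact XClosureAux.f1_X
        · exact XClosureAux.rbar1_X
      exact hle hg
    · intro hX
      exact XClosureAux.descend _ g rfl hX
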